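/- The cardinality of a semitransitive but not transitive subsemigroup S of IS_n is at least n + 1. -/

import Mathlib

def IsSubsemigroup {X : Type*} (S : Set (X ≃. X)) : Prop :=
  ∀ f ∈ S, ∀ g ∈ S, f.trans g ∈ S

def IsTransitiveSet {X : Type*} (S : Set (X ≃. X)) : Prop :=
  ∀ x y : X, ∃ f ∈ S, f x = some y

def IsSemitransitiveSet {X : Type*} (S : Set (X ≃. X)) : Prop :=
  ∀ x y : X, ∃ f ∈ S, f x = some y ∨ f y = some x

/-- A finite type with a transitive total relation has a bottom element. -/
lemma exists_rel_bot {X : Type*} [Fintype X] [Nonempty X] (R : X → X → Prop)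
    (htrans : ∀ {x y z}, R x y → R y z → R x z) (htot : ∀ x y, R x y ∨ R y x) :
    ∃ i, ∀ y, R i y := by
  classical
  have hrefl : ∀ x, R x x := fun x => (htot x x).elim id id
  suffices h : ∀ s : Finset X, s.Nonempty → ∃ i ∈ s, ∀ y ∈ s, R i y by
    obtain ⟨i, _, hi⟩ := h Finset.univ Finset.univ_nonempty
    exact ⟨i, fun y => hi y (Finset.mem_univ y)⟩
  intro s
  induction s using Finset.induction_on with
  | empty => rintro ⟨x, hx⟩; exact absurd hx (Finset.notMem_empty x)
  | @insert a s ha ih =>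
    intro _
    rcases s.eq_empty_or_nonempty with rfl | hs
    · exact ⟨a, Finset.mem_insert_self _ _, by
        intro y hy
        rcases Finset.mem_insert.1 hy with rfl | h
        · exact hrefl y
        · exact absurd h (Finset.notMem_empty y)⟩
    · obtain ⟨i, hi, hmin⟩ := ih hs
      rcases htot a i with h | h
      · refine ⟨a, Finset.mem_insert_self _ _, ?_⟩
        intro y hy
        rcases Finset.mem_insert.1 hy with rfl | hy'
        · exact hrefl y
        · exact htrans h (hmin y hy')
      · refine ⟨i, Finset.mem_insert_of_mem hi, ?_⟩
        intro y hy
        rcases Finset.mem_insert.1 hy with rfl | hy'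
        · exact h
        · exact hmin y hy'

lemma pequiv_trans_apply {X : Type*} (f g : X ≃. X) (x : X) :
    (f.trans g) x = (f x).bind g := rfl

/-- A semitransitive but not transitive subsemigroup of `IS_n` has at least `n + 1`
elements. -/
theorem semitransitive_card_lower_bound {X : Type*} [Fintype X] (n : ℕ) (hn : 1 ≤ n)
    (hcard : Fintype.card X = n) (S : Set (X ≃. X)) (hS : IsSubsemigroup S)
    (hsemi : IsSemitransitiveSet S) (htr : ¬ IsTransitiveSet S) :
    n + 1 ≤ S.ncard := by
  classical
  have hXne : Nonempty X := Fintype.card_pos_iff.1 (by omega)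
  -- the reachability relation
  set R : X → X → Prop := fun x y => ∃ f ∈ S, f x = some y with hR
  have htransR : ∀ {x y z}, R x y → R y z → R x z := by
    rintro x y z ⟨f, hf, hfx⟩ ⟨g, hg, hgy⟩
    exact ⟨f.trans g, hS f hf g hg, by rw [pequiv_trans_apply, hfx, Option.bind_some, hgy]⟩
  have htotR : ∀ x y, R x y ∨ R y x := by
    intro x y
    obtain ⟨f, hf, h⟩ := hsemi x y
    rcases h with h | h
    · exact Or.inl ⟨f, hf, h⟩
    · exact Or.inr ⟨f, hf, h⟩
  -- a cyclic element i
  obtain ⟨i, hi⟩ := exists_rel_bot R htransR htotR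
  choose fy hfyS hfyi using hi
  -- a non-reachable pair
  have : ∃ a b : X, ∀ f ∈ S, f a ≠ some b := by
    by_contra h
    push_neg at h
    exact htr fun x y => (h x y).imp fun f hf => ⟨hf.1, hf.2⟩
  obtain ⟨a, b, hab⟩ := this
  obtain ⟨g, hgS, hg⟩ : ∃ g ∈ S, g b = some a := by
    obtain ⟨f, hf, h⟩ := hsemi a b
    rcases h with h | h
    · exact absurd h (hab f hf)
    · exact ⟨f, hf, h⟩
  -- orbit of b under g
  set orb : ℕ → Option X := fun k => (fun o => o.bind g)^[k] (some b) with horb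
  have orb_zero : orb 0 = some b := rfl
  have orb_succ : ∀ k, orb (k + 1) = (orb k).bind g := by
    intro k
    simp only [horb, Function.iterate_succ_apply']
  have orb_one : orb 1 = some a := by rw [orb_succ, orb_zero, Option.bind_some, hg]
  -- elements realizing the orbit starting from b
  have claimA : ∀ k, ∃ h ∈ S, h b = orb (k + 1) := by
    intro k
    induction k with
    | zero => exact ⟨g, hgS, by rw [orb_one, hg]⟩
    | succ k ih =>
      obtain ⟨h, hhS, hh⟩ := ih
      exact ⟨h.trans g, hS h hhS g hgS, by rw [pequiv_trans_apply, hh, ← orb_succ]⟩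
  -- elements realizing the orbit starting from a
  have claimB : ∀ k, ∃ h ∈ S, h a = orb (k + 2) := by
    intro k
    induction k with
    | zero => exact ⟨g, hgS, by rw [orb_succ, orb_one, Option.bind_some]⟩
    | succ k ih =>
      obtain ⟨h, hhS, hh⟩ := ih
      exact ⟨h.trans g, hS h hhS g hgS, by rw [pequiv_trans_apply, hh, ← orb_succ]⟩
  -- the orbit must die
  have hdie : ∃ k, orb k = none := by
    by_contra hall
    push_neg at hall
    -- back-step injectivity
    have back : ∀ k m, orb (k + 1) = orb (m + 1) → orb k = orb m := by
      intro k m h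
      obtain ⟨u, hu⟩ := Option.ne_none_iff_exists'.1 (hall k)
      obtain ⟨v, hv⟩ := Option.ne_none_iff_exists'.1 (hall m)
      obtain ⟨w, hw⟩ := Option.ne_none_iff_exists'.1 (hall (k + 1))
      rw [orb_succ, hu, Option.bind_some] at h hw
      rw [orb_succ, hv, Option.bind_some] at h
      have h1 : g.symm w = some u := g.eq_some_iff.2 hw
      have h2 : g.symm w = some v := g.eq_some_iff.2 (h ▸ hw)
      rw [hu, hv, h1.symm.trans h2]
    have cancel : ∀ k d, orb (k + d) = orb k → orb d = orb 0 := by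
      intro k
      induction k with
      | zero => intro d h; simpa using h
      | succ k ih =>
        intro d h
        have : orb (k + d) = orb k := back _ _ (by rw [← h]; ring_nf)
        exact ih d this
    -- pigeonhole
    have : ¬ Function.Injective (fun k : Fin (n + 2) => orb k) := by
      intro hinj
      have := Fintype.card_le_of_injective _ hinj
      rw [Fintype.card_fin, Fintype.card_option, hcard] at this
      omega
    simp only [Function.Injective, not_forall] at this
    obtain ⟨k, m, hkm, hne⟩ := this
    have hne' : (k : ℕ) ≠ (m : ℕ) := fun h => hne (Fin.ext h)
    -- wlog k < m
    obtain ⟨p, q, hpq, hpqeq⟩ : ∃ p q : ℕ, p < q ∧ orb p = orb q := by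
      rcases lt_or_gt_of_ne hne' with h | h
      · exact ⟨k, m, h, hkm⟩
      · exact ⟨m, k, h, hkm.symm⟩
    obtain ⟨d, rfl⟩ : ∃ d, q = p + d := ⟨q - p, by omega⟩
    have hd : 1 ≤ d := by omega
    have horbd : orb d = some b := by
      rw [cancel p d hpqeq.symm, orb_zero]
    rcases Nat.lt_or_ge d 2 with h2 | h2
    · -- d = 1 : a = b
      have hd1 : d = 1 := by omega
      rw [hd1, orb_one] at horbd
      have : g a = some b := by rw [← Option.some_inj.1 horbd] at hg ⊢; exact hg
      exact hab g hgS this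
    · obtain ⟨e, rfl⟩ : ∃ e, d = e + 2 := ⟨d - 2, by omega⟩
      obtain ⟨h, hhS, hh⟩ := claimB e
      exact hab h hhS (hh.trans horbd)
  -- get an element killing b, then one killing i
  obtain ⟨h0, hh0S, hh0⟩ : ∃ h ∈ S, h b = none := by
    obtain ⟨k, hk⟩ := hdie
    have hk1 : k ≠ 0 := fun h => by rw [h, orb_zero] at hk; exact Option.some_ne_none b hk
    obtain ⟨m, rfl⟩ : ∃ m, k = m + 1 := ⟨k - 1, by omega⟩
    obtain ⟨h, hhS, hh⟩ := claimA m
    exact ⟨h, hhS, hh.trans hk⟩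
  set k0 : X ≃. X := (fy b).trans h0 with hk0
  have hk0S : k0 ∈ S := hS _ (hfyS b) _ hh0S
  have hk0i : k0 i = none := by
    rw [hk0, pequiv_trans_apply, hfyi b, Option.bind_some, hh0]
  -- the injection Option X → S
  set φ : Option X → (X ≃. X) := fun o => o.elim k0 fy with hφ
  have hφi : ∀ o, (φ o) i = o := by
    rintro (_ | y)
    · exact hk0i
    · exact hfyi y
  have hφinj : Function.Injective φ := by
    intro o1 o2 h
    rw [← hφi o1, ← hφi o2, h]
  have hφsub : Set.range φ ⊆ S := by
    rintro _ ⟨o, rfl⟩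
    rcases o with _ | y
    · exact hk0S
    · exact hfyS y
  haveI : Finite (X ≃. X) :=
    Finite.of_injective (fun f : X ≃. X => (f : X → Option X)) DFunLike.coe_injective
  have hcount : (Set.range φ).ncard = n + 1 := by
    rw [← Nat.card_coe_set_eq, Nat.card_range_of_injective hφinj,
      Nat.card_eq_fintype_card, Fintype.card_option, hcard]
  calc n + 1 = (Set.range φ).ncard := hcount.symm
    _ ≤ S.ncard := Set.ncard_le_ncard hφsub (Set.toFinite S)
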